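/- For each j ∈ [1,k], the restriction of the composition tableau T(∞) of D to the columns C_1,…,C_j coincides with the composition tableau of the truncated diagram consisting of the columns C_1,…,C_j alone. Consequently, ℓ(D) is the disjoint union of ℓ(D^k) (the line family of the diagram D^k obtained from D by deleting its last column C_k) and the set ℓ(D^k, C_k) of those lines of ℓ(D) whose right end-point lies in C_k. -/

import Mathlib

open scoped Classical

/-- height of column `j` of the diagram (columns numbered from 1). -/
def hgt (c : List ℕ) (j : ℕ) : ℕ := c.getD (j - 1) 0

/-- number of boxes in the columns strictly to the left of column `j`. -/
def off (c : List ℕ) (j : ℕ) : ℕ := (c.take (j - 1)).sum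

/-- `(i, j)` (row `i`, column `j`) is a box of the diagram `D`. -/
def IsBox (c : List ℕ) (i j : ℕ) : Prop :=
  1 ≤ j ∧ j ≤ c.length ∧ 1 ≤ i ∧ i ≤ hgt c j

/-- the entry of the box `(i, j)` in the tableau `T`. -/
def Tentry (c : List ℕ) (i j : ℕ) : ℕ := off c j + i

/-- the column of the box of `D` carrying entry `m` in `T`. -/
noncomputable def colOf (c : List ℕ) (m : ℕ) : ℕ := sInf {j | m ≤ (c.take j).sum}

/-- the row of the box of `D` carrying entry `m` in `T`. -/
noncomputable def rowOf (c : List ℕ) (m : ℕ) : ℕ := m - off c (colOf c m)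

/-- the total order `≼` on entries: increasing down columns, then from right to left. -/
def ple (c : List ℕ) (a b : ℕ) : Prop :=
  colOf c b < colOf c a ∨ (colOf c a = colOf c b ∧ a ≤ b)

/-- the strict version of `≼`. -/
def plt (c : List ℕ) (a b : ℕ) : Prop :=
  colOf c b < colOf c a ∨ (colOf c a = colOf c b ∧ a < b)

/-- column `j` has a left neighbour in `D`. -/
def HasLeftNb (c : List ℕ) (j : ℕ) : Prop :=
  ∃ i, 1 ≤ i ∧ i < j ∧ hgt c i = hgt c j ∧
    ∀ i', i < i' → i' < j → hgt c i' ≠ hgt c j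

/-- the `j`-th column of the tableau `T`, rows to optional entries. -/
def Tcol (c : List ℕ) (j : ℕ) : ℕ → Option ℕ := fun i =>
  if 1 ≤ i ∧ i ≤ hgt c j then some (Tentry c i j) else none

/-- one step of the propagation rule building `T(∞)`: the entry (if any) in row `t`
of column `j - 1` of `T(∞)` (given by `prev`) is propagated into the partially
built column `j` (given by `cur`). -/
noncomputable def propStep (c : List ℕ) (j : ℕ) (prev : ℕ → Option ℕ)
    (cur : ℕ → Option ℕ) (t : ℕ) : ℕ → Option ℕ :=
  match prev t with
  | none => cur
  | some l =>
    if hgt c j = t then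
      if HasLeftNb c j ∧ cur (t + 1) = none then
        Function.update cur (t + 1) (some l)
      else cur
    else
      if cur t = none then Function.update cur t (some l) else cur

/-- the `j`-th column of the composition tableau `T(∞)`. -/
noncomputable def TinfCol (c : List ℕ) : ℕ → ℕ → Option ℕ
  | 0 => fun _ => none
  | 1 => Tcol c 1
  | j + 2 =>
      (List.range (c.sum + 2)).foldl
        (propStep c (j + 2) (TinfCol c (j + 1))) (Tcol c (j + 2))

/-- labels of lines: `1` or `∗`. -/
inductive Lab : Type
  | one : Lab
  | star : Lab
deriving DecidableEq

/-- maximal height among the columns `1, …, j - 1`. -/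
def maxHgt (c : List ℕ) (j : ℕ) : ℕ := (c.take (j - 1)).foldr max 0

/-- the maximal column height of the diagram `D`. -/
def maxH (c : List ℕ) : ℕ := c.foldr max 0

/-- `LineB c a i j lab` : the line family `ℓ(D)` contains a line labelled `lab`
whose left end-point is the box of `D` carrying entry `a` in `T` and whose right
end-point is the box `(i, j)` (row `i` of column `C_j`). -/
def LineB (c : List ℕ) (a i j : ℕ) (lab : Lab) : Prop :=
  2 ≤ j ∧ j ≤ c.length ∧ 1 ≤ i ∧
    (match lab with
     | Lab.one =>
         (maxHgt c j < hgt c j ∧ i ≤ maxHgt c j + 1 ∧ TinfCol c (j - 1) i = some a)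
       ∨ (hgt c j ≤ maxHgt c j ∧ i + 1 ≤ hgt c j ∧ TinfCol c (j - 1) i = some a)
       ∨ (hgt c j ≤ maxHgt c j ∧ i = hgt c j ∧
           ¬(∃ j', 1 ≤ j' ∧ j' < j ∧ hgt c j' = hgt c j) ∧
           TinfCol c (j - 1) i = some a)
       ∨ (hgt c j ≤ maxHgt c j ∧ i = hgt c j ∧
           (∃ j', 1 ≤ j' ∧ j' < j ∧ hgt c j' = hgt c j) ∧
           TinfCol c (j - 1) (i + 1) = some a)
     | Lab.star =>
         hgt c j ≤ maxHgt c j ∧ i = hgt c j ∧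
           (∃ j', 1 ≤ j' ∧ j' < j ∧ hgt c j' = hgt c j) ∧
           TinfCol c (j - 1) i = some a)

/-- `LineE c a b lab` : `ℓ(D)` contains a line labelled `lab` joining the box of `D`
carrying entry `a` in `T` (on the left) to the box carrying entry `b` (on the right). -/
def LineE (c : List ℕ) (a b : ℕ) (lab : Lab) : Prop :=
  ∃ i j, LineB c a i j lab ∧ b = Tentry c i j

/-- the box `(i, j)` of `D` is right extremal relative to `ℓ(D)`. -/
def RExt (c : List ℕ) (i j : ℕ) : Prop :=
  IsBox c i j ∧ ∀ i' j', ¬ LineB c (Tentry c i j) i' j' Lab.one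

/-- `c` is a composition of `n`. -/
def IsComposition (c : List ℕ) (n : ℕ) : Prop :=
  c.sum = n ∧ ∀ x ∈ c, 0 < x

/- ===== auxiliary lemmas ===== -/

lemma le_foldrMax {l : List ℕ} {a : ℕ} (ha : a ∈ l) : a ≤ l.foldr max 0 := by
  induction l with
  | nil => cases ha
  | cons x xs ih =>
    rcases List.mem_cons.1 ha with h | h
    · subst h; exact le_max_left _ _
    · exact le_trans (ih h) (le_max_right _ _)

lemma hgt_le_maxH (c : List ℕ) (j : ℕ) : hgt c j ≤ maxH c := by
  unfold hgt maxH
  rcases lt_or_ge (j - 1) c.length with h | h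
  · rw [List.getD_eq_getElem?_getD, List.getElem?_eq_getElem h]
    exact le_foldrMax (List.getElem_mem h)
  · rw [List.getD_eq_default _ _ h]
    exact Nat.zero_le _

lemma foldrMax_le_sum (l : List ℕ) : l.foldr max 0 ≤ l.sum := by
  induction l with
  | nil => simp
  | cons x xs ih =>
    simp only [List.foldr_cons, List.sum_cons]
    exact max_le (Nat.le_add_right _ _) (le_trans ih (Nat.le_add_left _ _))

lemma hgt_take {c : List ℕ} {J j : ℕ} (h1 : 1 ≤ j) (h2 : j ≤ J) :
    hgt (c.take J) j = hgt c j := by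
  unfold hgt
  rw [List.getD_eq_getElem?_getD, List.getD_eq_getElem?_getD,
    List.getElem?_take_of_lt (by omega : j - 1 < J)]

lemma off_take {c : List ℕ} {J j : ℕ} (h : j - 1 ≤ J) : off (c.take J) j = off c j := by
  unfold off; rw [List.take_take, min_eq_left h]

lemma Tcol_take {c : List ℕ} {J j : ℕ} (h1 : 1 ≤ j) (h2 : j ≤ J) :
    Tcol (c.take J) j = Tcol c j := by
  funext i
  unfold Tcol Tentry
  rw [hgt_take h1 h2, off_take (by omega)]

lemma maxHgt_take {c : List ℕ} {J j : ℕ} (h : j - 1 ≤ J) :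
    maxHgt (c.take J) j = maxHgt c j := by
  unfold maxHgt; rw [List.take_take, min_eq_left h]

lemma HasLeftNb_take {c : List ℕ} {J j : ℕ} (h1 : 1 ≤ j) (h2 : j ≤ J) :
    HasLeftNb (c.take J) j ↔ HasLeftNb c j := by
  unfold HasLeftNb
  have hg : ∀ i, 1 ≤ i → i ≤ j → hgt (c.take J) i = hgt c i :=
    fun i hi hij => hgt_take hi (le_trans hij h2)
  constructor
  · rintro ⟨i, hi1, hij, he, hall⟩
    refine ⟨i, hi1, hij, ?_, fun i' ha hb => ?_⟩
    · rw [← hg i hi1 (le_of_lt hij), ← hg j h1 le_rfl]; exact he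
    · rw [← hg i' (by omega) (le_of_lt hb), ← hg j h1 le_rfl]; exact hall i' ha hb
  · rintro ⟨i, hi1, hij, he, hall⟩
    refine ⟨i, hi1, hij, ?_, fun i' ha hb => ?_⟩
    · rw [hg i hi1 (le_of_lt hij), hg j h1 le_rfl]; exact he
    · rw [hg i' (by omega) (le_of_lt hb), hg j h1 le_rfl]; exact hall i' ha hb

lemma propStep_of_none {c : List ℕ} {j : ℕ} {prev cur : ℕ → Option ℕ} {t : ℕ}
    (h : prev t = none) : propStep c j prev cur t = cur := by
  unfold propStep; rw [h]

lemma propStep_eval (c : List ℕ) (j : ℕ) (prev cur : ℕ → Option ℕ) (t' t : ℕ)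
    (h1 : t = t' → prev t' = none)
    (h2 : t = t' + 1 → prev t' = none ∨ hgt c j ≠ t') :
    propStep c j prev cur t' t = cur t := by
  unfold propStep
  cases hp : prev t' with
  | none => rfl
  | some l =>
    show (if hgt c j = t' then
        if HasLeftNb c j ∧ cur (t' + 1) = none then Function.update cur (t' + 1) (some l) else cur
      else if cur t' = none then Function.update cur t' (some l) else cur) t = cur t
    by_cases hh : hgt c j = t'
    · rw [if_pos hh]
      by_cases hc2 : HasLeftNb c j ∧ cur (t' + 1) = none
      · rw [if_pos hc2]
        apply Function.update_of_ne
        intro he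
        rcases h2 he with hpn | hne
        · rw [hp] at hpn; exact absurd hpn (by simp)
        · exact hne hh
      · rw [if_neg hc2]
    · rw [if_neg hh]
      by_cases hc2 : cur t' = none
      · rw [if_pos hc2]
        apply Function.update_of_ne
        intro he
        have := h1 he
        rw [hp] at this; exact absurd this (by simp)
      · rw [if_neg hc2]

lemma TinfCol_none (c : List ℕ) : ∀ j t, maxH c + 2 ≤ t → TinfCol c j t = none := by
  intro j
  induction j using Nat.strong_induction_on with
  | _ j ih =>
    match j with
    | 0 => intro t ht; simp [TinfCol]
    | 1 =>
      intro t ht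
      show Tcol c 1 t = none
      unfold Tcol
      rw [if_neg]
      rintro ⟨-, h2⟩
      have := hgt_le_maxH c 1
      omega
    | (m + 2) =>
      intro t ht
      show (List.range (c.sum + 2)).foldl
          (propStep c (m + 2) (TinfCol c (m + 1))) (Tcol c (m + 2)) t = none
      have key : ∀ (l : List ℕ) (cur : ℕ → Option ℕ), cur t = none →
          (l.foldl (propStep c (m + 2) (TinfCol c (m + 1))) cur) t = none := by
        intro l
        induction l with
        | nil => intro cur h; exact h
        | cons x xs ihl =>
          intro cur h
          apply ihl
          rw [propStep_eval]
          · exact h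
          · intro he; exact ih (m + 1) (by omega) x (by omega)
          · intro he
            by_cases hx : maxH c + 2 ≤ x
            · exact Or.inl (ih (m + 1) (by omega) x hx)
            · right; have := hgt_le_maxH c (m + 2); omega
      apply key
      unfold Tcol
      rw [if_neg]
      rintro ⟨-, h2⟩
      have := hgt_le_maxH c (m + 2)
      omega

lemma foldl_range_ext {α : Type*} (f : α → ℕ → α) (init : α) (M N : ℕ) (hMN : M ≤ N)
    (h : ∀ x t, M ≤ t → f x t = x) :
    (List.range N).foldl f init = (List.range M).foldl f init := by
  obtain ⟨d, rfl⟩ := Nat.exists_eq_add_of_le hMN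
  induction d with
  | zero => rfl
  | succ d ihd =>
    rw [show M + (d + 1) = (M + d) + 1 from rfl, List.range_succ, List.foldl_append]
    simp only [List.foldl_cons, List.foldl_nil]
    rw [h _ _ (Nat.le_add_right _ _), ihd (Nat.le_add_right _ _)]

lemma TinfCol_take (c : List ℕ) (J : ℕ) (hJ : 1 ≤ J) :
    ∀ j, j ≤ J → TinfCol (c.take J) j = TinfCol c j := by
  intro j
  induction j using Nat.strong_induction_on with
  | _ j ih =>
    match j with
    | 0 => intro _; rfl
    | 1 =>
      intro _
      show Tcol (c.take J) 1 = Tcol c 1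
      exact Tcol_take le_rfl hJ
    | (m + 2) =>
      intro hj
      have hprev : TinfCol (c.take J) (m + 1) = TinfCol c (m + 1) :=
        ih (m + 1) (by omega) (by omega)
      have hstep : propStep (c.take J) (m + 2) (TinfCol c (m + 1)) =
          propStep c (m + 2) (TinfCol c (m + 1)) := by
        funext cur t
        unfold propStep
        rw [hgt_take (by omega) hj, propext (HasLeftNb_take (by omega) hj)]
      show (List.range ((c.take J).sum + 2)).foldl
          (propStep (c.take J) (m + 2) (TinfCol (c.take J) (m + 1))) (Tcol (c.take J) (m + 2)) =
        (List.range (c.sum + 2)).foldl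
          (propStep c (m + 2) (TinfCol c (m + 1))) (Tcol c (m + 2))
      rw [hprev, hstep, Tcol_take (by omega : 1 ≤ m + 2) hj]
      have hsum : (c.take J).sum ≤ c.sum := by
        conv_rhs => rw [← List.take_append_drop J c]
        rw [List.sum_append]
        exact Nat.le_add_right _ _
      have hid : ∀ (x : ℕ → Option ℕ) (t : ℕ), (c.take J).sum + 2 ≤ t →
          propStep c (m + 2) (TinfCol c (m + 1)) x t = x := by
        intro x t ht
        apply propStep_of_none
        rw [← hprev]
        apply TinfCol_none
        have h1 := foldrMax_le_sum (c.take J)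
        unfold maxH
        omega
      exact (foldl_range_ext _ _ _ _ (by omega) hid).symm

lemma LineB_take (c : List ℕ) (J a i j : ℕ) (lab : Lab)
    (hJc : J ≤ c.length) (hjJ : j ≤ J) :
    LineB (c.take J) a i j lab ↔ LineB c a i j lab := by
  by_cases h2 : 2 ≤ j
  · have hJ1 : 1 ≤ J := le_trans (by omega) hjJ
    have e_hgt : hgt (c.take J) j = hgt c j := hgt_take (by omega) hjJ
    have e_max : maxHgt (c.take J) j = maxHgt c j := maxHgt_take (by omega)
    have e_tinf : TinfCol (c.take J) (j - 1) = TinfCol c (j - 1) :=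
      TinfCol_take c J hJ1 _ (by omega)
    have e_len : j ≤ (c.take J).length ↔ j ≤ c.length := by
      rw [List.length_take]
      omega
    have e_ex : (∃ j', 1 ≤ j' ∧ j' < j ∧ hgt (c.take J) j' = hgt c j) ↔
        (∃ j', 1 ≤ j' ∧ j' < j ∧ hgt c j' = hgt c j) := by
      constructor
      · rintro ⟨j', ha, hb, hc⟩
        exact ⟨j', ha, hb, by rw [← hc, hgt_take ha (by omega)]⟩
      · rintro ⟨j', ha, hb, hc⟩
        exact ⟨j', ha, hb, by rw [hgt_take ha (by omega), hc]⟩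
    cases lab <;>
      simp only [LineB, e_hgt, e_max, e_tinf, e_len, e_ex]
  · constructor <;> (rintro ⟨h, -⟩; omega)

/-- for each `j ∈ [1,k]` the restriction of the composition tableau
`T(∞)` of `D` to the columns `C_1, …, C_j` coincides with the composition tableau
of the truncated diagram consisting of `C_1, …, C_j` alone.  Consequently `ℓ(D)`
is the disjoint union of `ℓ(D^k)` (the line family of `D` with its last column
deleted) and of the set `ℓ(D^k, C_k)` of the lines of `ℓ(D)` whose right end-point
lies in `C_k`. -/
theorem statement6 (n : ℕ) (hn : 0 < n) (c : List ℕ) (hc : IsComposition c n) :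
    (∀ j, 1 ≤ j → j ≤ c.length → ∀ j' i, j' ≤ j →
        TinfCol (c.take j) j' i = TinfCol c j' i) ∧
    (∀ a i j lab, LineB c a i j lab ↔
        Xor' (LineB (c.take (c.length - 1)) a i j lab)
             (j = c.length ∧ LineB c a i j lab)) := by
  obtain ⟨hsum, hpos⟩ := hc
  have hk : 1 ≤ c.length := by
    rcases c with _ | ⟨x, xs⟩
    · simp at hsum; omega
    · simp
  refine ⟨?_, ?_⟩
  · intro j hj1 hj2 j' i hj'
    rw [TinfCol_take c j hj1 j' hj']
  · intro a i j lab
    by_cases hjk : j = c.length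
    · have hA : ¬ LineB (c.take (c.length - 1)) a i j lab := by
        intro h
        have h1 := h.2.1
        rw [List.length_take] at h1
        omega
      constructor
      · intro h
        exact Or.inr ⟨⟨hjk, h⟩, hA⟩
      · rintro (⟨h, -⟩ | ⟨⟨-, h⟩, -⟩)
        · exact absurd h hA
        · exact h
    · have hB : ¬ (j = c.length ∧ LineB c a i j lab) := fun h => hjk h.1
      by_cases hcond : 2 ≤ j ∧ j ≤ c.length - 1
      · have heq := LineB_take c (c.length - 1) a i j lab (by omega) hcond.2
        constructor
        · intro h
          exact Or.inl ⟨heq.mpr h, hB⟩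
        · rintro (⟨h, -⟩ | ⟨h, -⟩)
          · exact heq.mp h
          · exact absurd h hB
      · have hL : ¬ LineB c a i j lab := by
          intro h
          exact hcond ⟨h.1, by have := h.2.1; omega⟩
        have hA : ¬ LineB (c.take (c.length - 1)) a i j lab := by
          intro h
          have h1 := h.2.1
          rw [List.length_take] at h1
          exact hcond ⟨h.1, by omega⟩
        constructor
        · intro h; exact absurd h hL
        · rintro (⟨h, -⟩ | ⟨h, -⟩)
          · exact absurd h hA
          · exact absurd h hB
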